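/- Let 0 → N → E → M → 0 be a non-split short exact sequence of finite-dimensional modules over a finite-dimensional k-algebra A. Then dim_k End_A(M ⊕ N) > dim_k End_A(E). -/

import Mathlib

open Module

set_option linter.unusedSectionVars false

section Aux
variable {k : Type} [Field k] {A : Type} [Ring A] [Algebra k A]
variable {X Y Z : Type}
  [AddCommGroup X] [Module A X] [Module k X] [IsScalarTower k A X] [SMulCommClass A k X]
  [AddCommGroup Y] [Module A Y] [Module k Y] [IsScalarTower k A Y] [SMulCommClass A k Y]
  [AddCommGroup Z] [Module A Z] [Module k Z] [IsScalarTower k A Z] [SMulCommClass A k Z]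

theorem homFD [FiniteDimensional k X] [FiniteDimensional k Y] :
    FiniteDimensional k (X →ₗ[A] Y) :=
  FiniteDimensional.of_injective
    (LinearMap.restrictScalarsₗ k A X Y k)
    (LinearMap.restrictScalars_injective k)

/-- precomposition with an `A`-linear map, as a `k`-linear map. -/
def precompₖ (f : X →ₗ[A] Y) : (Y →ₗ[A] Z) →ₗ[k] (X →ₗ[A] Z) where
  toFun r := r ∘ₗ f
  map_add' := by intros; ext; simp
  map_smul' := by intros; ext; simp

/-- postcomposition with an `A`-linear map, as a `k`-linear map. -/
def postcompₖ (f : X →ₗ[A] Y) : (Z →ₗ[A] X) →ₗ[k] (Z →ₗ[A] Y) where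
  toFun r := f ∘ₗ r
  map_add' := by intros; ext; simp
  map_smul' := by intros; ext; simp

@[simp] theorem precompₖ_apply (f : X →ₗ[A] Y) (r : Y →ₗ[A] Z) :
    precompₖ (k := k) f r = r ∘ₗ f := rfl
@[simp] theorem postcompₖ_apply (f : X →ₗ[A] Y) (r : Z →ₗ[A] X) :
    postcompₖ (k := k) f r = f ∘ₗ r := rfl

theorem factor_through {E M : Type} [AddCommGroup E] [Module A E] [AddCommGroup M] [Module A M]
    (g : E →ₗ[A] M) (hg : Function.Surjective g) (r : E →ₗ[A] X)
    (hker : LinearMap.ker g ≤ LinearMap.ker r) : ∃ s : M →ₗ[A] X, s ∘ₗ g = r := by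
  refine ⟨(Submodule.liftQ (LinearMap.ker g) r hker) ∘ₗ
      (g.quotKerEquivOfSurjective hg).symm.toLinearMap, ?_⟩
  ext x
  have h : (g.quotKerEquivOfSurjective hg).symm (g x) = Submodule.Quotient.mk x := by
    apply (g.quotKerEquivOfSurjective hg).injective
    simp [LinearMap.quotKerEquivOfSurjective]
  simp [h]

variable {N E M : Type}
  [AddCommGroup N] [Module A N] [Module k N] [IsScalarTower k A N] [SMulCommClass A k N]
  [AddCommGroup E] [Module A E] [Module k E] [IsScalarTower k A E] [SMulCommClass A k E]
  [AddCommGroup M] [Module A M] [Module k M] [IsScalarTower k A M] [SMulCommClass A k M]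

theorem ker_precompₖ (f : N →ₗ[A] E) (g : E →ₗ[A] M) (hg : Function.Surjective g)
    (hfg : LinearMap.range f = LinearMap.ker g) :
    LinearMap.ker (precompₖ (k := k) (Z := X) f) =
      LinearMap.range (precompₖ (k := k) (Z := X) g) := by
  ext r
  simp only [LinearMap.mem_ker, LinearMap.mem_range, precompₖ_apply]
  constructor
  · intro h
    refine factor_through g hg r ?_
    intro x hx
    rw [← hfg] at hx
    obtain ⟨n, rfl⟩ := hx
    simpa using DFunLike.congr_fun h n
  · rintro ⟨s, rfl⟩
    ext n
    have : g (f n) = 0 := by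
      rw [← LinearMap.mem_ker, ← hfg]; exact ⟨n, rfl⟩
    simp [this]

theorem precompₖ_inj (g : E →ₗ[A] M) (hg : Function.Surjective g) :
    Function.Injective (precompₖ (k := k) (Z := X) g) := by
  intro s t h
  ext m
  obtain ⟨e, rfl⟩ := hg m
  simpa using DFunLike.congr_fun h e

theorem ker_postcompₖ (f : N →ₗ[A] E) (g : E →ₗ[A] M) (hf : Function.Injective f)
    (hfg : LinearMap.range f = LinearMap.ker g) :
    LinearMap.ker (postcompₖ (k := k) (Z := X) g) =
      LinearMap.range (postcompₖ (k := k) (Z := X) f) := by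
  ext h
  simp only [LinearMap.mem_ker, LinearMap.mem_range, postcompₖ_apply]
  constructor
  · intro hh
    have hrange : ∀ x : X, h x ∈ LinearMap.range f := by
      intro x
      rw [hfg, LinearMap.mem_ker]
      simpa using DFunLike.congr_fun hh x
    refine ⟨(LinearEquiv.ofInjective f hf).symm.toLinearMap ∘ₗ
        h.codRestrict (LinearMap.range f) hrange, ?_⟩
    ext x
    simp [LinearMap.codRestrict]
  · rintro ⟨s, rfl⟩
    ext x
    have : g (f (s x)) = 0 := by
      rw [← LinearMap.mem_ker, ← hfg]; exact ⟨s x, rfl⟩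
    simp [this]

theorem postcompₖ_inj (f : N →ₗ[A] E) (hf : Function.Injective f) :
    Function.Injective (postcompₖ (k := k) (Z := X) f) := by
  intro s t h
  ext x
  exact hf (by simpa using DFunLike.congr_fun h x)

end Aux

/-- If `0 → N → E → M → 0` is a non-split short exact sequence (the inclusion
`N → E` admits no `A`-linear retraction) of finite-dimensional modules over a
finite-dimensional `k`-algebra `A`, then
`dim_k End_A(M ⊕ N) > dim_k End_A(E)`. -/
theorem end_dim_dsum_gt_of_nonsplit_ses
    (k : Type) [Field k] (A : Type) [Ring A] [Algebra k A] [FiniteDimensional k A]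
    (M N E : Type)
    [AddCommGroup M] [Module A M] [Module k M] [IsScalarTower k A M]
      [SMulCommClass A k M] [FiniteDimensional k M]
    [AddCommGroup N] [Module A N] [Module k N] [IsScalarTower k A N]
      [SMulCommClass A k N] [FiniteDimensional k N]
    [AddCommGroup E] [Module A E] [Module k E] [IsScalarTower k A E]
      [SMulCommClass A k E] [FiniteDimensional k E]
    (f : N →ₗ[A] E) (g : E →ₗ[A] M)
    (hf : Function.Injective f) (hg : Function.Surjective g)
    (hfg : LinearMap.range f = LinearMap.ker g)
    (hnonsplit : ¬ ∃ r : E →ₗ[A] N, r ∘ₗ f = LinearMap.id) :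
    finrank k (Module.End A (M × N)) > finrank k (Module.End A E) := by
  haveI : FiniteDimensional k (M →ₗ[A] M) := homFD
  haveI : FiniteDimensional k (M →ₗ[A] N) := homFD
  haveI : FiniteDimensional k (N →ₗ[A] M) := homFD
  haveI : FiniteDimensional k (N →ₗ[A] N) := homFD
  haveI : FiniteDimensional k (E →ₗ[A] M) := homFD
  haveI : FiniteDimensional k (E →ₗ[A] N) := homFD
  haveI : FiniteDimensional k (E →ₗ[A] E) := homFD
  -- dim End(M × N) = a + b + c + d
  have hprodM : finrank k (M × N →ₗ[A] M) = finrank k (M →ₗ[A] M) + finrank k (N →ₗ[A] M) := by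
    rw [← (LinearMap.coprodEquiv (S := k) (R := A)).finrank_eq, Module.finrank_prod]
  have hprodN : finrank k (M × N →ₗ[A] N) = finrank k (M →ₗ[A] N) + finrank k (N →ₗ[A] N) := by
    rw [← (LinearMap.coprodEquiv (S := k) (R := A)).finrank_eq, Module.finrank_prod]
  haveI : FiniteDimensional k (M × N →ₗ[A] M) := homFD
  haveI : FiniteDimensional k (M × N →ₗ[A] N) := homFD
  have hend : finrank k (Module.End A (M × N)) =
      finrank k (M →ₗ[A] M) + finrank k (N →ₗ[A] M) +
        (finrank k (M →ₗ[A] N) + finrank k (N →ₗ[A] N)) := by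
    have : finrank k (Module.End A (M × N)) =
        finrank k ((M × N →ₗ[A] M) × (M × N →ₗ[A] N)) :=
      ((LinearMap.prodEquiv (S := k) (R := A)).finrank_eq).symm
    rw [this, Module.finrank_prod, hprodM, hprodN]
  -- dim Hom(E, X) = dim Hom(M, X) + dim range(· ∘ f)
  have homE : ∀ (X : Type) [AddCommGroup X] [Module A X] [Module k X] [IsScalarTower k A X]
      [SMulCommClass A k X] [FiniteDimensional k X],
      finrank k (E →ₗ[A] X) =
        finrank k (M →ₗ[A] X) + finrank k (LinearMap.range (precompₖ (k := k) (Z := X) f)) := by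
    intro X _ _ _ _ _ _
    haveI : FiniteDimensional k (E →ₗ[A] X) := homFD
    haveI : FiniteDimensional k (M →ₗ[A] X) := homFD
    have h1 := LinearMap.finrank_range_add_finrank_ker (precompₖ (k := k) (Z := X) f)
    rw [ker_precompₖ (k := k) f g hg hfg,
      LinearMap.finrank_range_of_inj (precompₖ_inj (k := k) g hg)] at h1
    omega
  -- strict bound for X = N
  have hEN : finrank k (E →ₗ[A] N) < finrank k (M →ₗ[A] N) + finrank k (N →ₗ[A] N) := by
    rw [homE N]
    have hne : LinearMap.range (precompₖ (k := k) (Z := N) f) < ⊤ := by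
      rw [lt_top_iff_ne_top]
      intro htop
      apply hnonsplit
      have : (LinearMap.id : N →ₗ[A] N) ∈ LinearMap.range (precompₖ (k := k) (Z := N) f) := by
        rw [htop]; trivial
      obtain ⟨r, hr⟩ := this
      exact ⟨r, hr⟩
    have := Submodule.finrank_lt hne.ne
    omega
  -- bound for X = M
  have hEM : finrank k (E →ₗ[A] M) ≤ finrank k (M →ₗ[A] M) + finrank k (N →ₗ[A] M) := by
    rw [homE M]
    have : finrank k (LinearMap.range (precompₖ (k := k) (Z := M) f)) ≤ finrank k (N →ₗ[A] M) :=
      Submodule.finrank_le _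
    omega
  -- dim End(E) ≤ dim Hom(E, N) + dim Hom(E, M)
  have hEE : finrank k (Module.End A E) ≤ finrank k (E →ₗ[A] N) + finrank k (E →ₗ[A] M) := by
    have h1 := LinearMap.finrank_range_add_finrank_ker (postcompₖ (k := k) (Z := E) g)
    rw [ker_postcompₖ (k := k) f g hf hfg,
      LinearMap.finrank_range_of_inj (postcompₖ_inj (k := k) f hf)] at h1
    have h2 : finrank k (LinearMap.range (postcompₖ (k := k) (Z := E) g)) ≤
        finrank k (E →ₗ[A] M) := Submodule.finrank_le _
    have : finrank k (Module.End A E) = finrank k (E →ₗ[A] E) := rfl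
    omega
  omega
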